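/- Fix n ≥ 2 and a partition λ of n-1. For set partitions π of {2,...,n} of type λ, the number f(π) of labelled trees T on [n] with φ(T) = π is the same for all such π; i.e., f(π₁) = f(π₂) whenever π₁ and π₂ have the same multiset of block sizes. -/

import Mathlib

open Finset Nat

/-- A labelled tree on `[n] = {1,…,n}` encoded by its parent function when rooted at `1`:
`p v` is the parent of `v` for each non-root vertex `2 ≤ v ≤ n` (so the edges of the tree
are exactly `{v, p v}` for `2 ≤ v ≤ n`), and `p` is the identity elsewhere. -/
def IsLabelledTree (n : ℕ) (p : ℕ → ℕ) : Prop :=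
  (∀ v, 2 ≤ v → v ≤ n → 1 ≤ p v ∧ p v ≤ n ∧ p v ≠ v) ∧
  (∀ v, 2 ≤ v → v ≤ n → ∃ k, p^[k] v = 1) ∧
  (∀ v, ¬ (2 ≤ v ∧ v ≤ n) → p v = v)

/-- With every edge `{i,j}`, `i < j`, oriented `i → j`, the head of the edge labelled `v`
(the edge `{v, p v}`) is its larger endpoint. -/
def head (p : ℕ → ℕ) (v : ℕ) : ℕ := max v (p v)

/-- The indegree of vertex `u`: the number of edges oriented into `u`. -/
def indeg (n : ℕ) (p : ℕ → ℕ) (u : ℕ) : ℕ :=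
  ((Finset.Icc 2 n).filter fun v => head p v = u).card

/-- `phiEq n p π` says that `π` is the partition `φ(T)` of `{2,…,n}` associated to the tree
with parent function `p`: two edge labels lie in a common block iff the corresponding
edges point into the same vertex. -/
def phiEq (n : ℕ) (p : ℕ → ℕ) (π : Finpartition (Finset.Icc 2 n)) : Prop :=
  ∀ v ∈ Finset.Icc 2 n, ∀ w ∈ Finset.Icc 2 n,
    ((∃ b ∈ π.parts, v ∈ b ∧ w ∈ b) ↔ head p v = head p w)

/- ### Auxiliary machinery -/


def tauf (x v : ℕ) : ℕ := if v = x then x + 1 else if v = x + 1 then x else v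

lemma tauf_tauf (x v : ℕ) : tauf x (tauf x v) = v := by unfold tauf; split_ifs <;> omega

lemma tauf_inj (x : ℕ) : Function.Injective (tauf x) := fun a b h => by
  rw [← tauf_tauf x a, h, tauf_tauf]

lemma tauf_eq_self {x v : ℕ} (h1 : v ≠ x) (h2 : v ≠ x + 1) : tauf x v = v := by
  unfold tauf; split_ifs <;> omega

lemma tauf_max (x a b : ℕ) (h1 : ¬(a = x ∧ b = x + 1)) (h2 : ¬(a = x + 1 ∧ b = x)) :
    tauf x (max a b) = max (tauf x a) (tauf x b) := by
  unfold tauf; simp only [Nat.max_def]; split_ifs <;> omega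

def Ffun (x : ℕ) (p : ℕ → ℕ) : ℕ → ℕ :=
  if p x = x + 1 then
    if p (x + 1) < x + 1 then p
    else fun v => if v = x then p (x + 1) else if v = x + 1 then x else p v
  else if p (x + 1) = x then
    if x + 1 < p x then fun v => if v = x + 1 then p x else if v = x then x + 1 else p v
    else fun v => if v ≤ x then tauf x (p v) else p v
  else fun v => tauf x (p (tauf x v))

lemma no_period {p : ℕ → ℕ} (h1 : p 1 = 1) {u k m : ℕ} (hk : p^[k] u = 1)
    (hm : p^[m] u = u) (hm1 : 1 ≤ m) : u = 1 := by
  have key : ∀ a, p^[m * a] u = u := by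
    intro a; induction a with
    | zero => simp
    | succ a ih => rw [Nat.mul_succ, Function.iterate_add_apply, hm, ih]
  have hkk : k ≤ m * k := Nat.le_mul_of_pos_left k (by omega)
  have h2 := key k
  rw [show m * k = (m * k - k) + k from by omega, Function.iterate_add_apply, hk,
    Function.iterate_fixed h1] at h2
  exact h2.symm

lemma chain_eq {p q : ℕ → ℕ} {u : ℕ} {k : ℕ} (h : ∀ j, j < k → q (p^[j] u) = p (p^[j] u)) :
    q^[k] u = p^[k] u := by
  induction k with
  | zero => rfl
  | succ k ih =>
    rw [Function.iterate_succ_apply', Function.iterate_succ_apply',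
      ih (fun j hj => h j (by omega)), h k (by omega)]

lemma reach_transfer {p q : ℕ → ℕ} {x : ℕ}
    (hqx : ∃ m, q^[m] x = 1) (hqx1 : ∃ m, q^[m] (x + 1) = 1)
    (hc : ∀ v, v ≠ x → v ≠ x + 1 → q v = p v ∨ q v = x ∨ q v = x + 1) :
    ∀ k v, p^[k] v = 1 → ∃ m, q^[m] v = 1 := by
  intro k; induction k with
  | zero => intro v hv; exact ⟨0, hv⟩
  | succ k ih =>
    intro v hv
    rcases eq_or_ne v x with rfl | h1
    · exact hqx
    rcases eq_or_ne v (x + 1) with rfl | h2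
    · exact hqx1
    rcases hc v h1 h2 with h | h | h
    · obtain ⟨m, hm⟩ := ih (p v) (by rwa [Function.iterate_succ_apply] at hv)
      exact ⟨m + 1, by rw [Function.iterate_succ_apply, h, hm]⟩
    · obtain ⟨m, hm⟩ := hqx
      exact ⟨m + 1, by rw [Function.iterate_succ_apply, h, hm]⟩
    · obtain ⟨m, hm⟩ := hqx1
      exact ⟨m + 1, by rw [Function.iterate_succ_apply, h, hm]⟩

lemma F_spec (n x : ℕ) (hx2 : 2 ≤ x) (hxn : x + 1 ≤ n) (p : ℕ → ℕ) (hp : IsLabelledTree n p) :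
    IsLabelledTree n (Ffun x p) ∧ Ffun x (Ffun x p) = p ∧
      ∃ g : ℕ → ℕ, Function.Injective g ∧
        ∀ v, 2 ≤ v → v ≤ n → head (Ffun x p) v = g (head p (tauf x v)) := by
  obtain ⟨hrange, hreach, hid⟩ := hp
  have hp1 : p 1 = 1 := hid 1 (by omega)
  have hpx := hrange x hx2 (by omega)
  have hpx1 := hrange (x + 1) (by omega) hxn
  have htx : tauf x x = x + 1 := by unfold tauf; rw [if_pos rfl]
  have htx1 : tauf x (x + 1) = x := by unfold tauf; rw [if_neg (by omega), if_pos rfl]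
  by_cases hA : p x = x + 1
  · by_cases hB : p (x + 1) < x + 1
    · -- same-block case: identity
      have hF : Ffun x p = p := by unfold Ffun; rw [if_pos hA, if_pos hB]
      rw [hF, hF]
      refine ⟨⟨hrange, hreach, hid⟩, rfl, id, Function.injective_id, ?_⟩
      intro v h2 h3
      rcases eq_or_ne v x with rfl | h1
      · rw [htx]; simp only [head, id_eq, hA]
        rw [Nat.max_def, Nat.max_def]; split_ifs <;> omega
      rcases eq_or_ne v (x + 1) with rfl | h2'
      · rw [htx1]; simp only [head, id_eq, hA]
        rw [Nat.max_def, Nat.max_def]; split_ifs <;> omega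
      · rw [tauf_eq_self h1 h2']; rfl
    · -- type 2': p x = x+1, p(x+1) > x+1
      have hw : x + 1 < p (x + 1) := by have := hpx1.2.2; omega
      have hF : Ffun x p = fun v => if v = x then p (x + 1) else if v = x + 1 then x else p v := by
        unfold Ffun; rw [if_pos hA, if_neg hB]
      rw [hF]
      set q : ℕ → ℕ := fun v => if v = x then p (x + 1) else if v = x + 1 then x else p v
        with hqdef
      have hq_x : q x = p (x + 1) := by simp [hqdef]
      have hq_x1 : q (x + 1) = x := by simp [hqdef]
      have hq_other : ∀ v, v ≠ x → v ≠ x + 1 → q v = p v := fun v h1 h2 => by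
        simp only [hqdef]; rw [if_neg h1, if_neg h2]
      obtain ⟨K, hK⟩ := hreach (x + 1) (by omega) hxn
      have hK0 : K ≠ 0 := by intro hc; rw [hc] at hK; simp at hK; omega
      obtain ⟨K', rfl⟩ : ∃ K', K = K' + 1 := ⟨K - 1, by omega⟩
      have hKu : p^[K'] (p (x + 1)) = 1 := by
        rw [← Function.iterate_succ_apply]; exact hK
      have hiter : ∀ i, p^[i] (p (x + 1)) = p^[i + 1] (x + 1) := fun i =>
        (Function.iterate_succ_apply p i (x + 1)).symm
      have havoid : ∀ j, p^[j] (p (x + 1)) ≠ x ∧ p^[j] (p (x + 1)) ≠ x + 1 := by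
        intro j
        constructor
        · intro hj
          have e2 : p^[(j + 1) + 1] (x + 1) = x + 1 := by
            rw [Function.iterate_succ_apply', ← hiter j, hj, hA]
          have := no_period hp1 hK e2 (by omega); omega
        · intro hj
          have e2 : p^[j + 1] (x + 1) = x + 1 := by rw [← hiter j, hj]
          have := no_period hp1 hK e2 (by omega); omega
      have hchain : q^[K'] (p (x + 1)) = p^[K'] (p (x + 1)) :=
        chain_eq (fun j _ => hq_other _ (havoid j).1 (havoid j).2)
      have hrx : q^[K' + 1] x = 1 := by
        rw [Function.iterate_succ_apply, hq_x, hchain, hKu]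
      have hrx1 : q^[K' + 1 + 1] (x + 1) = 1 := by
        rw [Function.iterate_succ_apply, hq_x1, hrx]
      refine ⟨⟨?_, ?_, ?_⟩, ?_, id, Function.injective_id, ?_⟩
      · intro v h2 h3
        rcases eq_or_ne v x with rfl | h1
        · rw [hq_x]; exact ⟨hpx1.1, hpx1.2.1, by omega⟩
        rcases eq_or_ne v (x + 1) with rfl | h2'
        · rw [hq_x1]; refine ⟨by omega, by omega, by omega⟩
        · rw [hq_other v h1 h2']; exact hrange v h2 h3
      · intro v h2 h3
        obtain ⟨k, hk⟩ := hreach v h2 h3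
        exact reach_transfer ⟨_, hrx⟩ ⟨_, hrx1⟩
          (fun u u1 u2 => Or.inl (hq_other u u1 u2)) k v hk
      · intro v hv
        rw [hq_other v (by omega) (by omega)]; exact hid v hv
      · have c1 : ¬(q x = x + 1) := by rw [hq_x]; omega
        have c2 : q (x + 1) = x := hq_x1
        have c3 : x + 1 < q x := by rw [hq_x]; exact hw
        unfold Ffun
        rw [if_neg c1, if_pos c2, if_pos c3]
        funext v
        rcases eq_or_ne v (x + 1) with rfl | h1
        · rw [if_pos rfl, hq_x]
        rw [if_neg h1]
        rcases eq_or_ne v x with rfl | h2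
        · rw [if_pos rfl]; exact hA.symm
        · rw [if_neg h2, hq_other v h2 h1]
      · intro v h2 h3
        rcases eq_or_ne v x with rfl | h1
        · rw [htx]; simp only [head, id_eq]; rw [hq_x]
          rw [Nat.max_def, Nat.max_def]; split_ifs <;> omega
        rcases eq_or_ne v (x + 1) with rfl | h2'
        · rw [htx1]; simp only [head, id_eq]; rw [hq_x1, hA]
          rw [Nat.max_def, Nat.max_def]; split_ifs <;> omega
        · rw [tauf_eq_self h1 h2']; simp only [head, id_eq]; rw [hq_other v h1 h2']
  · by_cases hC : p (x + 1) = x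
    · by_cases hD : x + 1 < p x
      · -- type 1 up: p(x+1) = x, p x > x+1
        have hF : Ffun x p = fun v => if v = x + 1 then p x else if v = x then x + 1 else p v := by
          unfold Ffun; rw [if_neg hA, if_pos hC, if_pos hD]
        rw [hF]
        set q : ℕ → ℕ := fun v => if v = x + 1 then p x else if v = x then x + 1 else p v
          with hqdef
        have hq_x1 : q (x + 1) = p x := by simp [hqdef]
        have hq_x : q x = x + 1 := by simp [hqdef]
        have hq_other : ∀ v, v ≠ x → v ≠ x + 1 → q v = p v := fun v h1 h2 => by
          simp only [hqdef]; rw [if_neg h2, if_neg h1]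
        obtain ⟨K, hK⟩ := hreach x hx2 (by omega)
        have hK0 : K ≠ 0 := by intro hc; rw [hc] at hK; simp at hK; omega
        obtain ⟨K', rfl⟩ : ∃ K', K = K' + 1 := ⟨K - 1, by omega⟩
        have hKu : p^[K'] (p x) = 1 := by rw [← Function.iterate_succ_apply]; exact hK
        have hiter : ∀ i, p^[i] (p x) = p^[i + 1] x := fun i =>
          (Function.iterate_succ_apply p i x).symm
        have havoid : ∀ j, p^[j] (p x) ≠ x ∧ p^[j] (p x) ≠ x + 1 := by
          intro j
          constructor
          · intro hj
            have e2 : p^[j + 1] x = x := by rw [← hiter j, hj]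
            have := no_period hp1 hK e2 (by omega); omega
          · intro hj
            have e2 : p^[(j + 1) + 1] x = x := by
              rw [Function.iterate_succ_apply', ← hiter j, hj, hC]
            have := no_period hp1 hK e2 (by omega); omega
        have hchain : q^[K'] (p x) = p^[K'] (p x) :=
          chain_eq (fun j _ => hq_other _ (havoid j).1 (havoid j).2)
        have hrx1 : q^[K' + 1] (x + 1) = 1 := by
          rw [Function.iterate_succ_apply, hq_x1, hchain, hKu]
        have hrx : q^[K' + 1 + 1] x = 1 := by
          rw [Function.iterate_succ_apply, hq_x, hrx1]
        refine ⟨⟨?_, ?_, ?_⟩, ?_, id, Function.injective_id, ?_⟩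
        · intro v h2 h3
          rcases eq_or_ne v x with rfl | h1
          · rw [hq_x]; refine ⟨by omega, by omega, by omega⟩
          rcases eq_or_ne v (x + 1) with rfl | h2'
          · rw [hq_x1]; exact ⟨hpx.1, hpx.2.1, by omega⟩
          · rw [hq_other v h1 h2']; exact hrange v h2 h3
        · intro v h2 h3
          obtain ⟨k, hk⟩ := hreach v h2 h3
          exact reach_transfer ⟨_, hrx⟩ ⟨_, hrx1⟩
            (fun u u1 u2 => Or.inl (hq_other u u1 u2)) k v hk
        · intro v hv
          rw [hq_other v (by omega) (by omega)]; exact hid v hv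
        · have c1 : q x = x + 1 := hq_x
          have c2 : ¬(q (x + 1) < x + 1) := by rw [hq_x1]; omega
          unfold Ffun
          rw [if_pos c1, if_neg c2]
          funext v
          rcases eq_or_ne v x with rfl | h1
          · rw [if_pos rfl, hq_x1]
          rw [if_neg h1]
          rcases eq_or_ne v (x + 1) with rfl | h2
          · rw [if_pos rfl]; exact hC.symm
          · rw [if_neg h2, hq_other v h1 h2]
        · intro v h2 h3
          rcases eq_or_ne v x with rfl | h1
          · rw [htx]; simp only [head, id_eq]; rw [hq_x, hC]
            rw [Nat.max_def, Nat.max_def]; split_ifs <;> omega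
          rcases eq_or_ne v (x + 1) with rfl | h2'
          · rw [htx1]; simp only [head, id_eq]; rw [hq_x1]
            rw [Nat.max_def, Nat.max_def]; split_ifs <;> omega
          · rw [tauf_eq_self h1 h2']; simp only [head, id_eq]; rw [hq_other v h1 h2']
      · -- redirect case: p(x+1) = x, p x < x
        have hg : p x < x := by have h1 := hpx.2.2; omega
        have hF : Ffun x p = fun v => if v ≤ x then tauf x (p v) else p v := by
          unfold Ffun; rw [if_neg hA, if_pos hC, if_neg hD]
        rw [hF]
        set q : ℕ → ℕ := fun v => if v ≤ x then tauf x (p v) else p v with hqdef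
        have hq_le : ∀ v, v ≤ x → q v = tauf x (p v) := fun v hv => by
          simp only [hqdef]; rw [if_pos hv]
        have hq_gt : ∀ v, x < v → q v = p v := fun v hv => by
          simp only [hqdef]; rw [if_neg (by omega)]
        have hq_x : q x = p x := by
          rw [hq_le x le_rfl]; exact tauf_eq_self (by omega) (by omega)
        have hq_x1 : q (x + 1) = x := by rw [hq_gt (x + 1) (by omega)]; exact hC
        obtain ⟨K, hK⟩ := hreach x hx2 (by omega)
        have hK0 : K ≠ 0 := by intro hc; rw [hc] at hK; simp at hK; omega
        obtain ⟨K', rfl⟩ : ∃ K', K = K' + 1 := ⟨K - 1, by omega⟩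
        have hKu : p^[K'] (p x) = 1 := by rw [← Function.iterate_succ_apply]; exact hK
        have hiter : ∀ i, p^[i] (p x) = p^[i + 1] x := fun i =>
          (Function.iterate_succ_apply p i x).symm
        have havoid : ∀ j, p^[j] (p x) ≠ x ∧ p^[j] (p x) ≠ x + 1 := by
          intro j
          constructor
          · intro hj
            have e2 : p^[j + 1] x = x := by rw [← hiter j, hj]
            have := no_period hp1 hK e2 (by omega); omega
          · intro hj
            have e2 : p^[(j + 1) + 1] x = x := by
              rw [Function.iterate_succ_apply', ← hiter j, hj, hC]
            have := no_period hp1 hK e2 (by omega); omega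
        have hchain : q^[K'] (p x) = p^[K'] (p x) := by
          apply chain_eq
          intro j _
          by_cases hw' : p^[j] (p x) ≤ x
          · rw [hq_le _ hw']
            have h3 := havoid (j + 1)
            rw [show p^[j + 1] (p x) = p (p^[j] (p x)) from Function.iterate_succ_apply' p j (p x)] at h3
            exact tauf_eq_self h3.1 h3.2
          · exact hq_gt _ (by omega)
        have hrx : q^[K' + 1] x = 1 := by
          rw [Function.iterate_succ_apply, hq_x, hchain, hKu]
        have hrx1 : q^[K' + 1 + 1] (x + 1) = 1 := by
          rw [Function.iterate_succ_apply, hq_x1, hrx]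
        refine ⟨⟨?_, ?_, ?_⟩, ?_, tauf x, tauf_inj x, ?_⟩
        · intro v h2 h3
          rcases eq_or_ne v x with rfl | h1
          · rw [hq_x]; exact hpx
          by_cases hvx : v ≤ x
          · rw [hq_le v hvx]
            obtain ⟨r1, r2, r3⟩ := hrange v h2 h3
            unfold tauf; refine ⟨?_, ?_, ?_⟩ <;> (split_ifs <;> omega)
          · rw [hq_gt v (by omega)]; exact hrange v h2 h3
        · intro v h2 h3
          obtain ⟨k, hk⟩ := hreach v h2 h3
          apply reach_transfer ⟨_, hrx⟩ ⟨_, hrx1⟩ ?_ k v hk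
          intro u u1 u2
          by_cases hu : u ≤ x
          · rw [hq_le u hu]
            by_cases hp1' : p u = x
            · right; right; rw [hp1', htx]
            by_cases hp2' : p u = x + 1
            · right; left; rw [hp2', htx1]
            · left; rw [tauf_eq_self hp1' hp2']
          · left; exact hq_gt u (by omega)
        · intro v hv
          by_cases hvx : v ≤ x
          · rw [hq_le v hvx, hid v hv]; exact tauf_eq_self (by omega) (by omega)
          · rw [hq_gt v (by omega)]; exact hid v hv
        · have c1 : ¬(q x = x + 1) := by rw [hq_x]; omega
          have c2 : q (x + 1) = x := hq_x1
          have c3 : ¬(x + 1 < q x) := by rw [hq_x]; omega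
          unfold Ffun
          rw [if_neg c1, if_pos c2, if_neg c3]
          funext v
          by_cases hvx : v ≤ x
          · rw [if_pos hvx, hq_le v hvx, tauf_tauf]
          · rw [if_neg hvx, hq_gt v (by omega)]
        · intro v h2 h3
          rcases eq_or_ne v x with rfl | h1
          · rw [htx]; simp only [head]; rw [hq_x, hC]
            unfold tauf
            rw [Nat.max_def, Nat.max_def]
            split_ifs <;> omega
          rcases eq_or_ne v (x + 1) with rfl | h2'
          · rw [htx1]; simp only [head]; rw [hq_x1]
            unfold tauf
            rw [Nat.max_def, Nat.max_def]
            split_ifs <;> omega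
          rw [tauf_eq_self h1 h2']
          by_cases hvx : v ≤ x
          · simp only [head]
            rw [hq_le v hvx, tauf_max x v (p v) (by rintro ⟨rfl, -⟩; exact h1 rfl)
              (by rintro ⟨rfl, -⟩; exact h2' rfl), tauf_eq_self h1 h2']
          · simp only [head]
            rw [hq_gt v (by omega)]
            have hle : v ≤ max v (p v) := le_max_left _ _
            exact (tauf_eq_self (by omega) (by omega)).symm
    · -- good case: conjugation
      have hF : Ffun x p = fun v => tauf x (p (tauf x v)) := by
        unfold Ffun; rw [if_neg hA, if_neg hC]
      rw [hF]
      set q : ℕ → ℕ := fun v => tauf x (p (tauf x v)) with hqdef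
      have hq : ∀ v, q v = tauf x (p (tauf x v)) := fun v => rfl
      have htm : ∀ v, 2 ≤ v → v ≤ n → 2 ≤ tauf x v ∧ tauf x v ≤ n := by
        intro v h2 h3; unfold tauf; split_ifs <;> omega
      have hit : ∀ k v, q^[k] v = tauf x (p^[k] (tauf x v)) := by
        intro k; induction k with
        | zero => intro v; simp only [Function.iterate_zero, id_eq]; exact (tauf_tauf x v).symm
        | succ k ih =>
          intro v
          rw [Function.iterate_succ_apply', ih, Function.iterate_succ_apply']
          rw [hq, tauf_tauf]
      refine ⟨⟨?_, ?_, ?_⟩, ?_, tauf x, tauf_inj x, ?_⟩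
      · intro v h2 h3
        obtain ⟨ht2, ht3⟩ := htm v h2 h3
        obtain ⟨r1, r2, r3⟩ := hrange (tauf x v) ht2 ht3
        rw [hq]
        have tb : 1 ≤ tauf x (p (tauf x v)) ∧ tauf x (p (tauf x v)) ≤ n := by
          by_cases ha : p (tauf x v) = x
          · rw [ha, htx]; omega
          by_cases hb : p (tauf x v) = x + 1
          · rw [hb, htx1]; omega
          · rw [tauf_eq_self ha hb]; omega
        refine ⟨tb.1, tb.2, ?_⟩
        · intro hcontra
          apply r3
          have := congrArg (tauf x) hcontra
          rw [tauf_tauf] at this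
          rw [this]
      · intro v h2 h3
        obtain ⟨ht2, ht3⟩ := htm v h2 h3
        obtain ⟨k, hk⟩ := hreach (tauf x v) ht2 ht3
        exact ⟨k, by rw [hit k v, hk]; exact tauf_eq_self (by omega) (by omega)⟩
      · intro v hv
        have hne1 : v ≠ x := by omega
        have hne2 : v ≠ x + 1 := by omega
        rw [hq, tauf_eq_self hne1 hne2, hid v hv, tauf_eq_self hne1 hne2]
      · have c1 : ¬(q x = x + 1) := by
          rw [hq, htx]
          intro hcontra
          apply hC
          exact tauf_inj x (by rw [hcontra, htx])
        have c2 : ¬(q (x + 1) = x) := by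
          rw [hq, htx1]
          intro hcontra
          apply hA
          exact tauf_inj x (by rw [hcontra, htx1])
        unfold Ffun
        rw [if_neg c1, if_neg c2]
        funext v
        show tauf x (q (tauf x v)) = p v
        rw [hq, tauf_tauf, tauf_tauf]
      · intro v h2 h3
        have hc1 : ¬(tauf x v = x ∧ p (tauf x v) = x + 1) := by
          rintro ⟨ha, hb⟩; rw [ha] at hb; exact hA hb
        have hc2 : ¬(tauf x v = x + 1 ∧ p (tauf x v) = x) := by
          rintro ⟨ha, hb⟩; rw [ha] at hb; exact hC hb
        simp only [head]
        rw [hq, tauf_max x (tauf x v) (p (tauf x v)) hc1 hc2, tauf_tauf]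

noncomputable def TreeCount (n : ℕ) (R : ℕ → ℕ → Prop) : ℕ :=
  Nat.card {p : ℕ → ℕ // IsLabelledTree n p ∧
    ∀ v ∈ Finset.Icc 2 n, ∀ w ∈ Finset.Icc 2 n, (R v w ↔ head p v = head p w)}

lemma tauf_mem {n x v : ℕ} (hx2 : 2 ≤ x) (hxn : x + 1 ≤ n) (hv : v ∈ Finset.Icc 2 n) :
    tauf x v ∈ Finset.Icc 2 n := by
  rw [Finset.mem_Icc] at *; unfold tauf; split_ifs <;> omega

lemma swapmain (n x : ℕ) (hx2 : 2 ≤ x) (hxn : x + 1 ≤ n) (R₁ R₂ : ℕ → ℕ → Prop)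
    (hR : ∀ v ∈ Finset.Icc 2 n, ∀ w ∈ Finset.Icc 2 n, (R₂ v w ↔ R₁ (tauf x v) (tauf x w))) :
    TreeCount n R₁ = TreeCount n R₂ := by
  apply Nat.card_congr
  have key : ∀ (S₁ S₂ : ℕ → ℕ → Prop),
      (∀ v ∈ Finset.Icc 2 n, ∀ w ∈ Finset.Icc 2 n, (S₂ v w ↔ S₁ (tauf x v) (tauf x w))) →
      ∀ p : ℕ → ℕ, IsLabelledTree n p →
      (∀ v ∈ Finset.Icc 2 n, ∀ w ∈ Finset.Icc 2 n, (S₁ v w ↔ head p v = head p w)) →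
      (∀ v ∈ Finset.Icc 2 n, ∀ w ∈ Finset.Icc 2 n,
        (S₂ v w ↔ head (Ffun x p) v = head (Ffun x p) w)) := by
    intro S₁ S₂ hS p hp hker v hv w hw
    obtain ⟨-, -, g, hg, hhead⟩ := F_spec n x hx2 hxn p hp
    have hv' := tauf_mem hx2 hxn hv
    have hw' := tauf_mem hx2 hxn hw
    have hv2 := Finset.mem_Icc.mp hv
    have hw2 := Finset.mem_Icc.mp hw
    rw [hS v hv w hw, hker _ hv' _ hw', hhead v hv2.1 hv2.2, hhead w hw2.1 hw2.2]
    exact (hg.eq_iff).symm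
  have hR' : ∀ v ∈ Finset.Icc 2 n, ∀ w ∈ Finset.Icc 2 n,
      (R₁ v w ↔ R₂ (tauf x v) (tauf x w)) := by
    intro v hv w hw
    have := hR (tauf x v) (tauf_mem hx2 hxn hv) (tauf x w) (tauf_mem hx2 hxn hw)
    rw [tauf_tauf, tauf_tauf] at this
    exact this.symm
  exact
    { toFun := fun P => ⟨Ffun x P.1, (F_spec n x hx2 hxn P.1 P.2.1).1,
        key R₁ R₂ hR P.1 P.2.1 P.2.2⟩
      invFun := fun P => ⟨Ffun x P.1, (F_spec n x hx2 hxn P.1 P.2.1).1,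
        key R₂ R₁ hR' P.1 P.2.1 P.2.2⟩
      left_inv := fun P => Subtype.ext ((F_spec n x hx2 hxn P.1 P.2.1).2.1)
      right_inv := fun P => Subtype.ext ((F_spec n x hx2 hxn P.1 P.2.1).2.1) }

def SwapSet (n : ℕ) : Set (Equiv.Perm ℕ) :=
  {τ | ∃ x, 2 ≤ x ∧ x + 1 ≤ n ∧ τ = Equiv.swap x (x + 1)}

lemma swap_eq_tauf (x : ℕ) (v : ℕ) : Equiv.swap x (x + 1) v = tauf x v := by
  rw [Equiv.swap_apply_def]; unfold tauf
  split_ifs <;> rfl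

lemma swap_mem_closure (n : ℕ) : ∀ d a b : ℕ, b - a ≤ d → 2 ≤ a → a ≤ b → b ≤ n →
    Equiv.swap a b ∈ Subgroup.closure (SwapSet n) := by
  intro d
  induction d with
  | zero =>
    intro a b h h2 hab hbn
    have : a = b := by omega
    subst this
    rw [Equiv.swap_self]
    exact Subgroup.one_mem _
  | succ d ih =>
    intro a b h h2 hab hbn
    by_cases hd : b - a ≤ d
    · exact ih a b hd h2 hab hbn
    have hba : b = a + d + 1 := by omega
    rcases Nat.eq_or_lt_of_le hab with rfl | hlt
    · rw [Equiv.swap_self]; exact Subgroup.one_mem _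
    by_cases hb1 : b = a + 1
    · subst hb1
      exact Subgroup.subset_closure ⟨a, h2, by omega, rfl⟩
    · have hkey := Equiv.swap_mul_swap_mul_swap
        (show a ≠ b - 1 by omega) (show a ≠ b by omega)
      -- hkey : swap (b-1) b * swap a (b-1) * swap (b-1) b = swap b a
      have m1 : Equiv.swap (b - 1) b ∈ Subgroup.closure (SwapSet n) := by
        apply Subgroup.subset_closure
        exact ⟨b - 1, by omega, by omega, by rw [show b - 1 + 1 = b from by omega]⟩
      have m2 : Equiv.swap a (b - 1) ∈ Subgroup.closure (SwapSet n) :=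
        ih a (b - 1) (by omega) h2 (by omega) (by omega)
      have : Equiv.swap a b = Equiv.swap (b - 1) b * Equiv.swap a (b - 1) * Equiv.swap (b - 1) b := by
        rw [hkey, Equiv.swap_comm]
      rw [this]
      exact mul_mem (mul_mem m1 m2) m1

lemma ofSubtype_mem (n : ℕ) (e : Equiv.Perm {a : ℕ // a ∈ Finset.Icc 2 n}) :
    Equiv.Perm.ofSubtype e ∈ Subgroup.closure (SwapSet n) := by
  refine Equiv.Perm.swap_induction_on e ?_ ?_
  · rw [map_one]; exact Subgroup.one_mem _
  · intro f u v huv hf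
    rw [map_mul, Equiv.Perm.ofSubtype_swap_eq]
    refine mul_mem ?_ hf
    have hu := Finset.mem_Icc.mp u.2
    have hv := Finset.mem_Icc.mp v.2
    rcases le_total (u : ℕ) (v : ℕ) with hle | hle
    · exact swap_mem_closure n _ u v le_rfl hu.1 hle hv.2
    · rw [Equiv.swap_comm]
      exact swap_mem_closure n _ v u le_rfl hv.1 hle hu.2

lemma perm_main (n : ℕ) (σ : Equiv.Perm ℕ) (hσ : σ ∈ Subgroup.closure (SwapSet n)) :
    (∀ v ∈ Finset.Icc 2 n, σ v ∈ Finset.Icc 2 n) ∧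
      ∀ R₁ R₂ : ℕ → ℕ → Prop,
        (∀ v ∈ Finset.Icc 2 n, ∀ w ∈ Finset.Icc 2 n, (R₂ v w ↔ R₁ (σ v) (σ w))) →
        TreeCount n R₁ = TreeCount n R₂ := by
  induction hσ using Subgroup.closure_induction with
  | mem τ hτ =>
    obtain ⟨x, hx2, hxn, rfl⟩ := hτ
    constructor
    · intro v hv; rw [swap_eq_tauf]; exact tauf_mem hx2 hxn hv
    · intro R₁ R₂ hconj
      apply swapmain n x hx2 hxn R₁ R₂
      intro v hv w hw
      rw [← swap_eq_tauf, ← swap_eq_tauf]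
      exact hconj v hv w hw
  | one =>
    constructor
    · intro v hv; simpa using hv
    · intro R₁ R₂ hconj
      apply Nat.card_congr
      apply Equiv.subtypeEquivRight
      intro p
      apply and_congr_right
      intro _
      have hc : ∀ v ∈ Finset.Icc 2 n, ∀ w ∈ Finset.Icc 2 n, (R₂ v w ↔ R₁ v w) := by
        intro v hv w hw
        simpa using hconj v hv w hw
      constructor
      · intro H v hv w hw
        exact (hc v hv w hw).trans (H v hv w hw)
      · intro H v hv w hw
        exact ((hc v hv w hw).symm).trans (H v hv w hw)
  | mul σ₁ σ₂ h1 h2 ih1 ih2 =>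
    obtain ⟨hm1, hP1⟩ := ih1
    obtain ⟨hm2, hP2⟩ := ih2
    constructor
    · intro v hv
      rw [Equiv.Perm.mul_apply]
      exact hm1 _ (hm2 v hv)
    · intro R₁ R₂ hconj
      refine (hP1 R₁ (fun a b => R₁ (σ₁ a) (σ₁ b)) (fun v _ w _ => Iff.rfl)).trans
        (hP2 _ R₂ ?_)
      intro v hv w hw
      have := hconj v hv w hw
      rwa [Equiv.Perm.mul_apply, Equiv.Perm.mul_apply] at this
  | inv σ hσ' ih =>
    obtain ⟨hm, hP⟩ := ih
    have himg : Finset.image (fun v => σ v) (Finset.Icc 2 n) = Finset.Icc 2 n := by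
      apply Finset.eq_of_subset_of_card_le
      · intro y hy
        obtain ⟨u, hu, rfl⟩ := Finset.mem_image.mp hy
        exact hm u hu
      · rw [Finset.card_image_of_injective _ σ.injective]
    have hminv : ∀ v ∈ Finset.Icc 2 n, σ⁻¹ v ∈ Finset.Icc 2 n := by
      intro v hv
      rw [← himg] at hv
      obtain ⟨u, hu, huv⟩ := Finset.mem_image.mp hv
      rw [← huv, Equiv.Perm.inv_def, Equiv.symm_apply_apply]
      exact hu
    refine ⟨hminv, ?_⟩
    intro R₁ R₂ hconj
    refine (hP R₂ R₁ ?_).symm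
    intro v hv w hw
    have := hconj (σ v) (hm v hv) (σ w) (hm w hw)
    simp only [Equiv.Perm.inv_def, Equiv.symm_apply_apply] at this
    exact this.symm

lemma glue : ∀ {t s : Multiset (Finset ℕ)}, Multiset.Rel (fun b c => b.card = c.card) t s →
    t.Nodup → s.Nodup →
    (∀ b ∈ t, ∀ c ∈ t, b ≠ c → Disjoint b c) →
    (∀ b ∈ s, ∀ c ∈ s, b ≠ c → Disjoint b c) →
    ∃ g : ℕ → ℕ, (∀ c ∈ t, c.image g ∈ s) ∧
      (∀ v w, (∃ c ∈ t, v ∈ c) → (∃ c ∈ t, w ∈ c) → g v = g w → v = w) := by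
  intro t s hrel
  induction hrel with
  | zero =>
    intro _ _ _ _
    refine ⟨id, ?_, ?_⟩
    · intro c hc; exact absurd hc (Multiset.notMem_zero c)
    · rintro v w ⟨c, hc, -⟩ -; exact absurd hc (Multiset.notMem_zero c)
  | @cons a b as bs hab hrel ih =>
    intro hnt hns hdt hds
    rw [Multiset.nodup_cons] at hnt hns
    obtain ⟨g', hg1', hg2'⟩ := ih hnt.2 hns.2
      (fun u hu v hv huv =>
        hdt u (Multiset.mem_cons_of_mem hu) v (Multiset.mem_cons_of_mem hv) huv)
      (fun u hu v hv huv =>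
        hds u (Multiset.mem_cons_of_mem hu) v (Multiset.mem_cons_of_mem hv) huv)
    classical
    set e := Finset.equivOfCardEq hab with hedef
    set g : ℕ → ℕ := fun v => if hv : v ∈ a then ((e ⟨v, hv⟩ : {y // y ∈ b}) : ℕ) else g' v
      with hgdef
    have hga : ∀ v (hv : v ∈ a), g v = ((e ⟨v, hv⟩ : {y // y ∈ b}) : ℕ) := fun v hv => by
      simp only [hgdef]; rw [dif_pos hv]
    have hgb : ∀ v (hv : v ∈ a), g v ∈ b := fun v hv => by
      rw [hga v hv]; exact (e ⟨v, hv⟩).2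
    have hgn : ∀ v, v ∉ a → g v = g' v := fun v hv => by
      simp only [hgdef]; rw [dif_neg hv]
    have hainj : ∀ u, u ∈ a → ∀ v, v ∈ a → g u = g v → u = v := by
      intro u hu v hv huv
      rw [hga u hu, hga v hv] at huv
      have := e.injective (Subtype.ext huv)
      exact congrArg Subtype.val this
    have hima : a.image g = b := by
      apply Finset.eq_of_subset_of_card_le
      · intro y hy
        obtain ⟨v, hv, rfl⟩ := Finset.mem_image.mp hy
        exact hgb v hv
      · rw [Finset.card_image_of_injOn (fun u hu v hv => hainj u hu v hv), ← hab]
    have hdisj_a : ∀ c ∈ as, Disjoint a c := fun c hc =>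
      hdt a (Multiset.mem_cons_self a as) c (Multiset.mem_cons_of_mem hc)
        (fun hac => hnt.1 (hac ▸ hc))
    refine ⟨g, ?_, ?_⟩
    · intro c hc
      rcases Multiset.mem_cons.mp hc with rfl | hc'
      · rw [hima]; exact Multiset.mem_cons_self b bs
      · have : c.image g = c.image g' := by
          apply Finset.image_congr
          intro v hv
          exact hgn v (Finset.disjoint_left.mp (hdisj_a c hc') · hv)
        rw [this]
        exact Multiset.mem_cons_of_mem (hg1' c hc')
    · intro v w hv hw hvw
      obtain ⟨cv, hcv, hvcv⟩ := hv
      obtain ⟨cw, hcw, hwcw⟩ := hw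
      by_cases h1 : v ∈ a <;> by_cases h2 : w ∈ a
      · exact hainj v h1 w h2 hvw
      · -- v ∈ a, w ∉ a
        exfalso
        rcases Multiset.mem_cons.mp hcw with rfl | hcw'
        · exact h2 hwcw
        have hBbs : cw.image g' ∈ bs := hg1' cw hcw'
        have hdisj : Disjoint b (cw.image g') :=
          hds b (Multiset.mem_cons_self b bs) _ (Multiset.mem_cons_of_mem hBbs)
            (fun hb => hns.1 (hb ▸ hBbs))
        have hw' : g w ∈ cw.image g' := by
          rw [hgn w h2]; exact Finset.mem_image_of_mem g' hwcw
        exact Finset.disjoint_left.mp hdisj (hvw ▸ hgb v h1) hw'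
      · -- w ∈ a, v ∉ a
        exfalso
        rcases Multiset.mem_cons.mp hcv with rfl | hcv'
        · exact h1 hvcv
        have hBbs : cv.image g' ∈ bs := hg1' cv hcv'
        have hdisj : Disjoint b (cv.image g') :=
          hds b (Multiset.mem_cons_self b bs) _ (Multiset.mem_cons_of_mem hBbs)
            (fun hb => hns.1 (hb ▸ hBbs))
        have hv' : g v ∈ cv.image g' := by
          rw [hgn v h1]; exact Finset.mem_image_of_mem g' hvcv
        exact Finset.disjoint_left.mp hdisj (hvw ▸ hgb w h2) hv'
      · rcases Multiset.mem_cons.mp hcv with rfl | hcv'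
        · exact absurd hvcv h1
        rcases Multiset.mem_cons.mp hcw with rfl | hcw'
        · exact absurd hwcw h2
        rw [hgn v h1, hgn w h2] at hvw
        exact hg2' v w ⟨cv, hcv', hvcv⟩ ⟨cw, hcw', hwcw⟩ hvw

/-- The number `f(π)` of labelled trees `T` on `[n]` with `φ(T) = π` depends only on the
type of `π`: `f(π₁) = f(π₂)` whenever `π₁` and `π₂` have the same multiset of block sizes. -/
theorem card_preimage_depends_only_on_type (n : ℕ) (hn : 2 ≤ n)
    (π₁ π₂ : Finpartition (Finset.Icc 2 n))
    (h : Multiset.map Finset.card π₁.parts.val = Multiset.map Finset.card π₂.parts.val) :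
    Nat.card {p : ℕ → ℕ // IsLabelledTree n p ∧ phiEq n p π₁} =
      Nat.card {p : ℕ → ℕ // IsLabelledTree n p ∧ phiEq n p π₂} := by
  classical
  have hrel : Multiset.Rel (fun b c => b.card = c.card) π₂.parts.val π₁.parts.val :=
    Multiset.rel_map.mp (Multiset.rel_eq.mpr h.symm)
  have hd1 : ∀ b ∈ π₁.parts.val, ∀ c ∈ π₁.parts.val, b ≠ c → Disjoint b c := by
    intro b hb c hc hbc
    exact π₁.supIndep.pairwiseDisjoint (by exact_mod_cast hb) (by exact_mod_cast hc) hbc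
  have hd2 : ∀ b ∈ π₂.parts.val, ∀ c ∈ π₂.parts.val, b ≠ c → Disjoint b c := by
    intro b hb c hc hbc
    exact π₂.supIndep.pairwiseDisjoint (by exact_mod_cast hb) (by exact_mod_cast hc) hbc
  obtain ⟨g, hg1, hg2⟩ := glue hrel π₂.parts.nodup π₁.parts.nodup hd2 hd1
  have hg1' : ∀ c ∈ π₂.parts, c.image g ∈ π₁.parts := fun c hc => hg1 c hc
  have hgIcc : ∀ v ∈ Finset.Icc 2 n, g v ∈ Finset.Icc 2 n := by
    intro v hv
    obtain ⟨c, hc, hvc⟩ := π₂.exists_mem hv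
    exact π₁.le (hg1' c hc) (Finset.mem_image_of_mem g hvc)
  have hgInj : ∀ v ∈ Finset.Icc 2 n, ∀ w ∈ Finset.Icc 2 n, g v = g w → v = w := by
    intro v hv w hw hvw
    obtain ⟨cv, hcv, hvcv⟩ := π₂.exists_mem hv
    obtain ⟨cw, hcw, hwcw⟩ := π₂.exists_mem hw
    exact hg2 v w ⟨cv, hcv, hvcv⟩ ⟨cw, hcw, hwcw⟩ hvw
  have hinj : Function.Injective
      (fun a : {y : ℕ // y ∈ Finset.Icc 2 n} => (⟨g a.1, hgIcc a.1 a.2⟩ : {y : ℕ // y ∈ Finset.Icc 2 n})) :=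
    fun a b hab => Subtype.ext (hgInj a.1 a.2 b.1 b.2 (congrArg Subtype.val hab))
  set e : Equiv.Perm {y : ℕ // y ∈ Finset.Icc 2 n} :=
    Equiv.ofBijective _ (Finite.injective_iff_bijective.mp hinj) with hedef
  set σ : Equiv.Perm ℕ := Equiv.Perm.ofSubtype e with hσdef
  have hσapp : ∀ v (hv : v ∈ Finset.Icc 2 n), σ v = g v := by
    intro v hv
    rw [hσdef, Equiv.Perm.ofSubtype_apply_of_mem e hv]
    rfl
  have hσmem : σ ∈ Subgroup.closure (SwapSet n) := ofSubtype_mem n e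
  have hconj : ∀ v ∈ Finset.Icc 2 n, ∀ w ∈ Finset.Icc 2 n,
      ((∃ b ∈ π₂.parts, v ∈ b ∧ w ∈ b) ↔ (∃ b ∈ π₁.parts, σ v ∈ b ∧ σ w ∈ b)) := by
    intro v hv w hw
    rw [hσapp v hv, hσapp w hw]
    constructor
    · rintro ⟨c, hc, hvc, hwc⟩
      exact ⟨c.image g, hg1' c hc, Finset.mem_image_of_mem g hvc,
        Finset.mem_image_of_mem g hwc⟩
    · rintro ⟨B, hB, hgv, hgw⟩
      obtain ⟨cv, hcv, hvcv⟩ := π₂.exists_mem hv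
      obtain ⟨cw, hcw, hwcw⟩ := π₂.exists_mem hw
      have e1 : cv.image g = B :=
        π₁.eq_of_mem_parts (hg1' cv hcv) hB (Finset.mem_image_of_mem g hvcv) hgv
      have e2 : cw.image g = B :=
        π₁.eq_of_mem_parts (hg1' cw hcw) hB (Finset.mem_image_of_mem g hwcw) hgw
      have hgw' : g w ∈ cv.image g := by rw [e1, ← e2]; exact Finset.mem_image_of_mem g hwcw
      obtain ⟨u, hu, hgu⟩ := Finset.mem_image.mp hgw'
      have huw : u = w := hg2 u w ⟨cv, hcv, hu⟩ ⟨cw, hcw, hwcw⟩ hgu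
      exact ⟨cv, hcv, hvcv, huw ▸ hu⟩
  exact (perm_main n σ hσmem).2
    (fun v w => ∃ b ∈ π₁.parts, v ∈ b ∧ w ∈ b)
    (fun v w => ∃ b ∈ π₂.parts, v ∈ b ∧ w ∈ b) hconj
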